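/- arXiv:1412.2801 — 3 statements merged into one kernel-verified Lean document; each statement's English description precedes it below -/
import Mathlib

section
/- Every automorphism of the real quaternion algebra ℍ is inner; that is, for every ℝ-algebra automorphism φ of ℍ there exists a nonzero quaternion σ such that φ(q) = σ⁻¹ q σ for all q ∈ ℍ. -/
open Quaternion

private def qI : ℍ[ℝ] := ⟨0,1,0,0⟩
private def qJ : ℍ[ℝ] := ⟨0,0,1,0⟩
private def qK : ℍ[ℝ] := ⟨0,0,0,1⟩

private lemma hII : qI * qI = -1 := by
  ext <;> simp [Quaternion.re_mul, Quaternion.imI_mul, Quaternion.imJ_mul, Quaternion.imK_mul] <;> simp [qI]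
private lemma hJJ : qJ * qJ = -1 := by
  ext <;> simp [Quaternion.re_mul, Quaternion.imI_mul, Quaternion.imJ_mul, Quaternion.imK_mul] <;> simp [qJ]
private lemma hKK : qK * qK = -1 := by
  ext <;> simp [Quaternion.re_mul, Quaternion.imI_mul, Quaternion.imJ_mul, Quaternion.imK_mul] <;> simp [qK]
private lemma hIJ : qI * qJ = qK := by
  ext <;> simp [Quaternion.re_mul, Quaternion.imI_mul, Quaternion.imJ_mul, Quaternion.imK_mul] <;> simp [qI, qJ, qK]
private lemma hJI : qJ * qI = -qK := by
  ext <;> simp [Quaternion.re_mul, Quaternion.imI_mul, Quaternion.imJ_mul, Quaternion.imK_mul] <;> simp [qI, qJ, qK]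
private lemma hJK : qJ * qK = qI := by
  ext <;> simp [Quaternion.re_mul, Quaternion.imI_mul, Quaternion.imJ_mul, Quaternion.imK_mul] <;> simp [qI, qJ, qK]
private lemma hKJ : qK * qJ = -qI := by
  ext <;> simp [Quaternion.re_mul, Quaternion.imI_mul, Quaternion.imJ_mul, Quaternion.imK_mul] <;> simp [qI, qJ, qK]
private lemma hKI : qK * qI = qJ := by
  ext <;> simp [Quaternion.re_mul, Quaternion.imI_mul, Quaternion.imJ_mul, Quaternion.imK_mul] <;> simp [qI, qJ, qK]
private lemma hIK : qI * qK = -qJ := by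
  ext <;> simp [Quaternion.re_mul, Quaternion.imI_mul, Quaternion.imJ_mul, Quaternion.imK_mul] <;> simp [qI, qJ, qK]

private lemma hII' (a : ℍ[ℝ]) : qI * (qI * a) = -a := by rw [← mul_assoc, hII, neg_one_mul]
private lemma hJJ' (a : ℍ[ℝ]) : qJ * (qJ * a) = -a := by rw [← mul_assoc, hJJ, neg_one_mul]
private lemma hKK' (a : ℍ[ℝ]) : qK * (qK * a) = -a := by rw [← mul_assoc, hKK, neg_one_mul]
private lemma hIJ' (a : ℍ[ℝ]) : qI * (qJ * a) = qK * a := by rw [← mul_assoc, hIJ]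
private lemma hJI' (a : ℍ[ℝ]) : qJ * (qI * a) = -(qK * a) := by rw [← mul_assoc, hJI, neg_mul]
private lemma hJK' (a : ℍ[ℝ]) : qJ * (qK * a) = qI * a := by rw [← mul_assoc, hJK]
private lemma hKJ' (a : ℍ[ℝ]) : qK * (qJ * a) = -(qI * a) := by rw [← mul_assoc, hKJ, neg_mul]
private lemma hKI' (a : ℍ[ℝ]) : qK * (qI * a) = qJ * a := by rw [← mul_assoc, hKI]
private lemma hIK' (a : ℍ[ℝ]) : qI * (qK * a) = -(qJ * a) := by rw [← mul_assoc, hIK, neg_mul]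

private lemma hdec (a : ℍ[ℝ]) : (↑a.re + a.imI • qI + a.imJ • qJ + a.imK • qK) = a := by
  ext <;> simp <;> simp [qI, qJ, qK]

theorem skolem_noether_quaternions
    (φ : ℍ[ℝ] ≃ₐ[ℝ] ℍ[ℝ]) :
    ∃ σ : ℍ[ℝ], σ ≠ 0 ∧ ∀ q : ℍ[ℝ], φ q = σ⁻¹ * q * σ := by
  set i' := φ qI with hi'
  set j' := φ qJ with hj'
  set k' := φ qK with hk'
  have pII : i' * i' = -1 := by rw [hi', ← map_mul, hII, map_neg, map_one]
  have pJJ : j' * j' = -1 := by rw [hj', ← map_mul, hJJ, map_neg, map_one]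
  have pKK : k' * k' = -1 := by rw [hk', ← map_mul, hKK, map_neg, map_one]
  have pIJ : i' * j' = k' := by rw [hi', hj', hk', ← map_mul, hIJ]
  have pJI : j' * i' = -k' := by rw [hi', hj', hk', ← map_mul, hJI, map_neg]
  have pJK : j' * k' = i' := by rw [hi', hj', hk', ← map_mul, hJK]
  have pKJ : k' * j' = -i' := by rw [hi', hj', hk', ← map_mul, hKJ, map_neg]
  have pKI : k' * i' = j' := by rw [hi', hj', hk', ← map_mul, hKI]
  have pIK : i' * k' = -j' := by rw [hi', hj', hk', ← map_mul, hIK, map_neg]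
  set T : ℍ[ℝ] → ℍ[ℝ] := fun x => x - qI * x * i' - qJ * x * j' - qK * x * k' with hT
  have keyI : ∀ x, qI * T x = T x * i' := by
    intro x
    simp only [hT, mul_sub, sub_mul, mul_assoc, hII', hJJ', hKK', hIJ', hJI', hJK', hKJ', hKI',
      hIK', pII, pJJ, pKK, pIJ, pJI, pJK, pKJ, pKI, pIK, mul_neg, neg_mul, mul_one, neg_neg,
      one_mul, sub_neg_eq_add]
    abel
  have keyJ : ∀ x, qJ * T x = T x * j' := by
    intro x
    simp only [hT, mul_sub, sub_mul, mul_assoc, hII', hJJ', hKK', hIJ', hJI', hJK', hKJ', hKI',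
      hIK', pII, pJJ, pKK, pIJ, pJI, pJK, pKJ, pKI, pIK, mul_neg, neg_mul, mul_one, neg_neg,
      one_mul, sub_neg_eq_add]
    abel
  have keyK : ∀ x, qK * T x = T x * k' := by
    intro x
    simp only [hT, mul_sub, sub_mul, mul_assoc, hII', hJJ', hKK', hIJ', hJI', hJK', hKJ', hKI',
      hIK', pII, pJJ, pKK, pIJ, pJI, pJK, pKJ, pKI, pIK, mul_neg, neg_mul, mul_one, neg_neg,
      one_mul, sub_neg_eq_add]
    abel
  have hsum : T 1 - qI * T qI - qJ * T qJ - qK * T qK = 4 := by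
    simp only [hT, mul_sub, sub_mul, mul_assoc, hII, hJJ, hKK, hIJ, hJI, hJK, hKJ, hKI, hIK,
      hII', hJJ', hKK', hIJ', hJI', hJK', hKJ', hKI', hIK', mul_neg, neg_mul, mul_one, neg_neg,
      one_mul, sub_neg_eq_add, mul_add, add_mul, sub_mul, mul_sub]
    abel_nf
    norm_num
  -- pick a nonzero σ among T 1, T qI, T qJ, T qK
  have hex : ∃ σ : ℍ[ℝ], σ ≠ 0 ∧ qI * σ = σ * i' ∧ qJ * σ = σ * j' ∧ qK * σ = σ * k' := by
    by_cases h1 : T 1 ≠ 0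
    · exact ⟨T 1, h1, keyI 1, keyJ 1, keyK 1⟩
    by_cases h2 : T qI ≠ 0
    · exact ⟨T qI, h2, keyI qI, keyJ qI, keyK qI⟩
    by_cases h3 : T qJ ≠ 0
    · exact ⟨T qJ, h3, keyI qJ, keyJ qJ, keyK qJ⟩
    by_cases h4 : T qK ≠ 0
    · exact ⟨T qK, h4, keyI qK, keyJ qK, keyK qK⟩
    push_neg at h1 h2 h3 h4
    rw [h1, h2, h3, h4] at hsum
    simp at hsum
    have h40 : (4:ℍ[ℝ]) ≠ 0 := by
      have h4 : ((4:ℕ):ℍ[ℝ]) = (4:ℍ[ℝ]) := by norm_cast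
      intro h
      rw [← h4] at h
      have := congrArg QuaternionAlgebra.re h
      rw [Quaternion.re_natCast, Quaternion.re_zero] at this
      norm_num at this
    exact absurd hsum.symm h40
  obtain ⟨σ, hσ, hcI, hcJ, hcK⟩ := hex
  refine ⟨σ, hσ, fun q => ?_⟩
  have hmain : σ * φ q = q * σ := by
    conv_lhs => rw [← hdec q]
    conv_rhs => rw [← hdec q]
    rw [map_add, map_add, map_add, map_smul, map_smul, map_smul, ← hi', ← hj', ← hk']
    have hcoe : φ (↑q.re : ℍ[ℝ]) = ↑q.re := by
      have := AlgEquiv.commutes φ q.re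
      rwa [Quaternion.algebraMap_def] at this
    rw [hcoe]
    simp only [mul_add, add_mul, mul_smul_comm, smul_mul_assoc, hcI, hcJ, hcK]
    rw [Quaternion.coe_commutes]
  rw [mul_assoc, ← hmain, ← mul_assoc, inv_mul_cancel₀ hσ, one_mul]
end

section
/- Every involutive ℝ-algebra automorphism of ℍ is either the identity or is of the form q ↦ τ⁻¹ q τ for some pure quaternion τ with τ² = -1. -/
open Quaternion

noncomputable section

namespace InvolHelper

def I : ℍ[ℝ] := ⟨0,1,0,0⟩
def J : ℍ[ℝ] := ⟨0,0,1,0⟩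
def K : ℍ[ℝ] := ⟨0,0,0,1⟩
lemma I_parts : I.re = 0 ∧ I.imI = 1 ∧ I.imJ = 0 ∧ I.imK = 0 := ⟨rfl, rfl, rfl, rfl⟩
lemma J_parts : J.re = 0 ∧ J.imI = 0 ∧ J.imJ = 1 ∧ J.imK = 0 := ⟨rfl, rfl, rfl, rfl⟩
lemma K_parts : K.re = 0 ∧ K.imI = 0 ∧ K.imJ = 0 ∧ K.imK = 1 := ⟨rfl, rfl, rfl, rfl⟩

lemma II : I * I = -1 := by
  ext <;> simp [I_parts, Quaternion.re_mul, Quaternion.imI_mul, Quaternion.imJ_mul, Quaternion.imK_mul]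
lemma JJ : J * J = -1 := by
  ext <;> simp [J_parts, Quaternion.re_mul, Quaternion.imI_mul, Quaternion.imJ_mul, Quaternion.imK_mul]
lemma KK : K * K = -1 := by
  ext <;> simp [K_parts, Quaternion.re_mul, Quaternion.imI_mul, Quaternion.imJ_mul, Quaternion.imK_mul]
lemma IJ : I * J = K := by
  ext <;> simp [I_parts, J_parts, K_parts, Quaternion.re_mul, Quaternion.imI_mul, Quaternion.imJ_mul, Quaternion.imK_mul]
lemma JI : J * I = -K := by
  ext <;> simp [I_parts, J_parts, K_parts, Quaternion.re_mul, Quaternion.imI_mul, Quaternion.imJ_mul, Quaternion.imK_mul]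
lemma JK : J * K = I := by
  ext <;> simp [I_parts, J_parts, K_parts, Quaternion.re_mul, Quaternion.imI_mul, Quaternion.imJ_mul, Quaternion.imK_mul]
lemma KJ : K * J = -I := by
  ext <;> simp [I_parts, J_parts, K_parts, Quaternion.re_mul, Quaternion.imI_mul, Quaternion.imJ_mul, Quaternion.imK_mul]
lemma KI : K * I = J := by
  ext <;> simp [I_parts, J_parts, K_parts, Quaternion.re_mul, Quaternion.imI_mul, Quaternion.imJ_mul, Quaternion.imK_mul]
lemma IK : I * K = -J := by
  ext <;> simp [I_parts, J_parts, K_parts, Quaternion.re_mul, Quaternion.imI_mul, Quaternion.imJ_mul, Quaternion.imK_mul]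

lemma decomp (q : ℍ[ℝ]) :
    q = ((q.re : ℝ) : ℍ[ℝ]) + q.imI • I + q.imJ • J + q.imK • K := by
  ext <;> simp [I_parts, J_parts, K_parts]

lemma exists_intertwiner (φ : ℍ[ℝ] ≃ₐ[ℝ] ℍ[ℝ]) :
    ∃ u : ℍ[ℝ], u ≠ 0 ∧ ∀ q, u * φ q = q * u := by
  set a := φ I with ha
  set b := φ J with hb
  set c := φ K with hc
  have haa : a * a = -1 := by rw [ha, ← map_mul, II, map_neg, map_one]
  have hbb : b * b = -1 := by rw [hb, ← map_mul, JJ, map_neg, map_one]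
  have hcc : c * c = -1 := by rw [hc, ← map_mul, KK, map_neg, map_one]
  have hab : a * b = c := by rw [ha, hb, hc, ← map_mul, IJ]
  have hba : b * a = -c := by rw [ha, hb, hc, ← map_mul, JI, map_neg]
  have hbc : b * c = a := by rw [ha, hb, hc, ← map_mul, JK]
  have hcb : c * b = -a := by rw [ha, hb, hc, ← map_mul, KJ, map_neg]
  have hca : c * a = b := by rw [ha, hb, hc, ← map_mul, KI]
  have hac : a * c = -b := by rw [ha, hb, hc, ← map_mul, IK, map_neg]
  set U : ℍ[ℝ] → ℍ[ℝ] := fun p => p - I*p*a - J*p*b - K*p*c with hUdef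
  -- basic intertwining on generators
  have hUa : ∀ p, (U p) * a = I * (U p) := by
    intro p
    have e1 : (U p) * a = p*a - I*(p*(a*a)) - J*(p*(b*a)) - K*(p*(c*a)) := by
      simp only [hUdef]; noncomm_ring
    have e2 : I * (U p) = I*p - (I*I)*(p*a) - (I*J)*(p*b) - (I*K)*(p*c) := by
      simp only [hUdef]; noncomm_ring
    rw [e1, e2, haa, hba, hca, II, IJ, IK]
    noncomm_ring
  have hUb : ∀ p, (U p) * b = J * (U p) := by
    intro p
    have e1 : (U p) * b = p*b - I*(p*(a*b)) - J*(p*(b*b)) - K*(p*(c*b)) := by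
      simp only [hUdef]; noncomm_ring
    have e2 : J * (U p) = J*p - (J*I)*(p*a) - (J*J)*(p*b) - (J*K)*(p*c) := by
      simp only [hUdef]; noncomm_ring
    rw [e1, e2, hab, hbb, hcb, JI, JJ, JK]
    noncomm_ring
  have hUc : ∀ p, (U p) * c = K * (U p) := by
    intro p
    have e1 : (U p) * c = p*c - I*(p*(a*c)) - J*(p*(b*c)) - K*(p*(c*c)) := by
      simp only [hUdef]; noncomm_ring
    have e2 : K * (U p) = K*p - (K*I)*(p*a) - (K*J)*(p*b) - (K*K)*(p*c) := by
      simp only [hUdef]; noncomm_ring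
    rw [e1, e2, hac, hbc, hcc, KI, KJ, KK]
    noncomm_ring
  -- the four values can't all vanish
  have hkey : U 1 - I * U I - J * U J - K * U K = ((4:ℝ) : ℍ[ℝ]) := by
    simp only [hUdef]
    ext <;>
      simp [I_parts, J_parts, K_parts, Quaternion.re_mul, Quaternion.imI_mul, Quaternion.imJ_mul,
        Quaternion.imK_mul] <;> ring
  have hφcoe : ∀ r : ℝ, φ ((r : ℝ) : ℍ[ℝ]) = ((r : ℝ) : ℍ[ℝ]) := by
    intro r
    have := φ.commutes r
    rw [← Quaternion.algebraMap_def]; exact this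
  -- full intertwining
  have hU : ∀ p q, (U p) * φ q = q * (U p) := by
    intro p q
    conv_lhs => rw [decomp q]
    conv_rhs => rw [decomp q]
    simp only [map_add, map_smul, hφcoe, mul_add, add_mul, mul_smul_comm, smul_mul_assoc,
      ← ha, ← hb, ← hc, hUa p, hUb p, hUc p, Quaternion.coe_mul_eq_smul, Quaternion.mul_coe_eq_smul]
  -- pick a nonzero one
  by_cases h1 : U 1 ≠ 0
  · exact ⟨U 1, h1, hU 1⟩
  by_cases h2 : U I ≠ 0
  · exact ⟨U I, h2, hU I⟩
  by_cases h3 : U J ≠ 0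
  · exact ⟨U J, h3, hU J⟩
  by_cases h4 : U K ≠ 0
  · exact ⟨U K, h4, hU K⟩
  push_neg at h1 h2 h3 h4
  rw [h1, h2, h3, h4] at hkey
  simp only [mul_zero, sub_zero, zero_sub, neg_zero] at hkey
  exfalso
  have : (4:ℝ) = 0 := by
    have := congrArg QuaternionAlgebra.re hkey
    simp at this
  norm_num at this

end InvolHelper

open InvolHelper in
theorem involutive_automorphism_classification
    (φ : ℍ[ℝ] ≃ₐ[ℝ] ℍ[ℝ]) (hinv : ∀ q, φ (φ q) = q) :
    (∀ q, φ q = q) ∨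
      ∃ τ : ℍ[ℝ], τ.re = 0 ∧ τ ^ 2 = -1 ∧ ∀ q : ℍ[ℝ], φ q = τ⁻¹ * q * τ := by
  obtain ⟨u, hu0, hu⟩ := exists_intertwiner φ
  -- u*u is central
  have h1 : ∀ r, u * r = φ r * u := by
    intro r
    have := hu (φ r)
    rwa [hinv r] at this
  have hcent : ∀ r, (u * u) * r = r * (u * u) := by
    intro r
    calc (u*u)*r = u*(u*r) := by rw [mul_assoc]
    _ = u*(φ r * u) := congrArg (u * ·) (h1 r)
    _ = (u * φ r)*u := by rw [mul_assoc]
    _ = (r*u)*u := by rw [hu r]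
    _ = r*(u*u) := by rw [mul_assoc]
  -- hence u*u is real
  have hI := hcent I
  have hJ := hcent J
  rw [Quaternion.ext_iff] at hI hJ
  simp only [I_parts, J_parts, Quaternion.re_mul, Quaternion.imI_mul, Quaternion.imJ_mul,
    Quaternion.imK_mul] at hI hJ
  obtain ⟨eI1,eI2,eI3,eI4⟩ := hI
  obtain ⟨eJ1,eJ2,eJ3,eJ4⟩ := hJ
  have hrI : u.re * u.imI = 0 := by linear_combination eJ4 / 4
  have hrJ : u.re * u.imJ = 0 := by linear_combination - eI4 / 4
  have hrK : u.re * u.imK = 0 := by linear_combination eI3 / 4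
  by_cases hpure : u.imI = 0 ∧ u.imJ = 0 ∧ u.imK = 0
  · -- u is a nonzero real, so φ = id
    left
    obtain ⟨e1, e2, e3⟩ := hpure
    have huco : u = ((u.re : ℝ) : ℍ[ℝ]) := by ext <;> simp [e1, e2, e3]
    have hre0 : u.re ≠ 0 := by
      intro h
      apply hu0
      rw [huco, h]; simp
    intro q
    have h2 := hu q
    rw [huco, Quaternion.coe_mul_eq_smul, Quaternion.mul_coe_eq_smul] at h2
    exact smul_right_injective _ hre0 h2
  · -- u is pure (nonzero imaginary part forces re = 0)
    right
    have hre0 : u.re = 0 := by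
      rcases not_and_or.mp hpure with h | h
      · exact (mul_eq_zero.mp hrI).resolve_right h
      rcases not_and_or.mp h with h' | h'
      · exact (mul_eq_zero.mp hrJ).resolve_right h'
      · exact (mul_eq_zero.mp hrK).resolve_right h'
    set m : ℝ := u.imI^2 + u.imJ^2 + u.imK^2 with hm
    have hmpos : 0 < m := by
      rcases not_and_or.mp hpure with h | h
      · positivity
      rcases not_and_or.mp h with h' | h'
      · positivity
      · positivity
    have huu : u * u = ((-m : ℝ) : ℍ[ℝ]) := by
      ext <;>
        simp only [Quaternion.re_mul, Quaternion.imI_mul, Quaternion.imJ_mul,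
          Quaternion.imK_mul, Quaternion.re_coe, Quaternion.imI_coe, Quaternion.imJ_coe,
          Quaternion.imK_coe, hre0, hm] <;> ring
    set n : ℝ := Real.sqrt m with hn
    have hnpos : 0 < n := Real.sqrt_pos.mpr hmpos
    have hn2 : n * n = m := Real.mul_self_sqrt hmpos.le
    refine ⟨(n⁻¹ : ℝ) • u, ?_, ?_, ?_⟩
    · simp [hre0]
    · have : ((n⁻¹ : ℝ) • u) ^ 2 = (n⁻¹ * n⁻¹) • (u * u) := by
        rw [sq, smul_mul_assoc, mul_smul_comm, smul_smul]
      rw [this, huu, Quaternion.smul_coe]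
      have : n⁻¹ * n⁻¹ * (-m) = -1 := by
        field_simp
        linarith [hn2]
      rw [this]
      simp
    · have hτ0 : ((n⁻¹ : ℝ) • u) ≠ 0 := by
        simp only [ne_eq, smul_eq_zero, not_or]
        exact ⟨inv_ne_zero hnpos.ne', hu0⟩
      intro q
      have hint : ((n⁻¹ : ℝ) • u) * φ q = q * ((n⁻¹ : ℝ) • u) := by
        rw [smul_mul_assoc, mul_smul_comm, hu q]
      rw [mul_assoc, ← hint, ← mul_assoc, inv_mul_cancel₀ hτ0, one_mul]
end
end

section
/- Two n×n quaternion matrices A and B are i-consimilar (i.e., there exists an invertible quaternion matrix S with (-i S⁻¹ i) A S = B, where -i S⁻¹ i means applying the automorphism h ↦ -ihi entrywise to S⁻¹) if and only if the matrices iA and iB are similar over ℍ. -/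
open Quaternion

noncomputable def qi : ℍ[ℝ] := ⟨0, 1, 0, 0⟩

/-- Entrywise application of the involutive automorphism `h ↦ -ihi`. -/
noncomputable def phiM {n : ℕ} (M : Matrix (Fin n) (Fin n) ℍ[ℝ]) :
    Matrix (Fin n) (Fin n) ℍ[ℝ] := M.map fun h => -(qi * h * qi)

/-- Similarity of quaternion matrices: `B = S⁻¹ A S` for invertible `S`. -/
def QSimilar {n : ℕ} (A B : Matrix (Fin n) (Fin n) ℍ[ℝ]) : Prop :=
  ∃ S T : Matrix (Fin n) (Fin n) ℍ[ℝ], S * T = 1 ∧ T * S = 1 ∧ T * A * S = B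

lemma qi_mul_qi : qi * qi = -1 := by
  ext <;> simp only [Quaternion.re_mul, Quaternion.imI_mul, Quaternion.imJ_mul, Quaternion.imK_mul] <;> simp [qi]

lemma map_f_cancel {n : ℕ} (M : Matrix (Fin n) (Fin n) ℍ[ℝ]) :
    (M.map fun x => qi * x).map (fun x => -(qi * x)) = M := by
  refine Matrix.ext fun i j => ?_
  simp only [Matrix.map_apply]
  rw [← mul_assoc, qi_mul_qi]
  simp

lemma key_lemma {n : ℕ} (A S T : Matrix (Fin n) (Fin n) ℍ[ℝ]) :
    ((phiM T * A * S).map fun x => qi * x)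
      = T * (A.map fun x => qi * x) * S := by
  refine Matrix.ext fun i j => ?_
  simp only [Matrix.map_apply, Matrix.mul_apply, Finset.mul_sum, Finset.sum_mul, phiM]
  refine Finset.sum_congr rfl fun k _ => Finset.sum_congr rfl fun l _ => ?_
  simp only [neg_mul, mul_neg, mul_assoc]
  rw [← mul_assoc qi qi, qi_mul_qi]
  simp [mul_assoc]

theorem iConsimilar_iff_iA_similar_iB {n : ℕ}
    (A B : Matrix (Fin n) (Fin n) ℍ[ℝ]) :
    (∃ S T : Matrix (Fin n) (Fin n) ℍ[ℝ],
        S * T = 1 ∧ T * S = 1 ∧ phiM T * A * S = B) ↔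
      QSimilar (A.map fun x => qi * x) (B.map fun x => qi * x) := by
  constructor
  · rintro ⟨S, T, h1, h2, h3⟩
    exact ⟨S, T, h1, h2, by rw [← h3]; exact (key_lemma A S T).symm⟩
  · rintro ⟨S, T, h1, h2, h3⟩
    refine ⟨S, T, h1, h2, ?_⟩
    have := congrArg (Matrix.map · (fun x => -(qi * x))) ((key_lemma A S T).trans h3)
    rw [map_f_cancel, map_f_cancel] at this
    exact this
end
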